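/- Let X be drawn from the uniform SBM prior with fixed first vertex and parameter λ > 0 on k communities and n vertices, and let x = X_{12}. For any connected multigraph α with |α| ≥ 1 and both 1 ∈ V(α) and 2 ∈ V(α), the recursively defined quantity κ_α(x, X) satisfies |κ_α(x, X)| ≤ λ^{|α|+1} (1/k)^{|V(α)|−1} (|α| + 1)^{|α|}. -/

import Mathlib

/-- Off-diagonal unordered pairs of `Fin n`: the possible edges of a loopless
multigraph, `N = n(n−1)/2` of them. -/
abbrev OffDiag (n : ℕ) := {e : Sym2 (Fin n) // ¬ e.IsDiag}

/-- The set of vertices spanned by the edges of the multigraph `α`. -/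
def vertexSetE {n : ℕ} (α : OffDiag n → ℕ) : Set (Fin n) :=
  {v | ∃ e : OffDiag n, α e ≠ 0 ∧ v ∈ e.1}

/-- The simple graph underlying the multigraph `α`. -/
def edgeGraphE {n : ℕ} (α : OffDiag n → ℕ) : SimpleGraph (Fin n) :=
  SimpleGraph.fromRel (fun i j =>
    ∃ h : ¬ (s(i, j) : Sym2 (Fin n)).IsDiag, α ⟨s(i, j), h⟩ ≠ 0)

/-- Connectivity of the multigraph `α`. -/
def MGConnectedE {n : ℕ} (α : OffDiag n → ℕ) : Prop :=
  (vertexSetE α).Nonempty ∧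
    ∀ u ∈ vertexSetE α, ∀ v ∈ vertexSetE α, (edgeGraphE α).Reachable u v

/-- The quantities `κ_α(x, X)` defined by the Schramm–Wein recursion
`κ_α = E[x X^α] − Σ_{β ⪇ α} κ_β · C(α,β) · E[X^{α−β}]` (with `κ₀ = E[x]`),
given the moment functionals `Mx α = E[x X^α]` and `Mm α = E[X^α]`. -/
noncomputable def kappaRec {E : Type*} [Fintype E] [DecidableEq E]
    (Mx Mm : (E → ℕ) → ℝ) (α : E → ℕ) : ℝ :=
  Mx α - ∑ β ∈ ((Finset.Icc 0 α).erase α).attach,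
    kappaRec Mx Mm β.1 * ((∏ e, (α e).choose (β.1 e) : ℕ) : ℝ) * Mm (α - β.1)
termination_by ∑ e, α e
decreasing_by
  have hβ := β.2
  rw [Finset.mem_erase, Finset.mem_Icc] at hβ
  obtain ⟨hne, _, hle⟩ := hβ
  obtain ⟨e, he⟩ := Function.ne_iff.mp hne
  exact Finset.sum_lt_sum (fun i _ => hle i)
    ⟨e, Finset.mem_univ e, lt_of_le_of_ne (hle e) he⟩

/-- The entry `X_{ij} = λ·1(zᵢ = z_j)`, as a function on unordered pairs. -/
noncomputable def Xent {n k : ℕ} (lam : ℝ) (z : Fin n → Fin k) :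
    Sym2 (Fin n) → ℝ :=
  Sym2.lift ⟨fun i j => if z i = z j then lam else 0,
    fun i j => by by_cases h : z i = z j <;> simp [h, eq_comm]⟩

/-- `X^α = Π_e X_e^{α_e}`. -/
noncomputable def Xpow {n k : ℕ} (lam : ℝ) (z : Fin n → Fin k)
    (α : OffDiag n → ℕ) : ℝ :=
  ∏ e : OffDiag n, Xent lam z e.1 ^ α e

/-- Expectation under the uniform SBM prior with fixed first vertex:
`z₁ = 1` and `z₂, …, z_n` i.i.d. uniform on `[k]`. -/
noncomputable def sbmE (n k : ℕ) (hn : 0 < n) (hk : 0 < k)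
    (f : (Fin n → Fin k) → ℝ) : ℝ :=
  (∑ z ∈ Finset.univ.filter (fun z : Fin n → Fin k => z ⟨0, hn⟩ = ⟨0, hk⟩), f z) /
    ((Finset.univ.filter (fun z : Fin n → Fin k => z ⟨0, hn⟩ = ⟨0, hk⟩)).card : ℝ)

/-- `κ_α(x, X)` for `x = X_{12}` under the uniform SBM prior with fixed first
vertex and parameter `λ`. -/
noncomputable def kappaSBM (n k : ℕ) (hn : 2 ≤ n) (hk : 0 < k) (lam : ℝ) :
    (OffDiag n → ℕ) → ℝ :=
  kappaRec
    (fun α => sbmE n k (by omega) hk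
      (fun z => Xent lam z s((⟨0, by omega⟩ : Fin n), (⟨1, hn⟩ : Fin n)) *
        Xpow lam z α))
    (fun α => sbmE n k (by omega) hk (fun z => Xpow lam z α))


section Graph
set_option linter.unusedSectionVars false

open SimpleGraph

variable {V : Type*} [Fintype V]

/-- Number of connected components. -/
noncomputable def ncomp (G : SimpleGraph V) : ℕ := Nat.card G.ConnectedComponent

noncomputable instance (G : SimpleGraph V) : Finite G.ConnectedComponent :=
  Quot.finite _

lemma ncomp_le_of_le {G H : SimpleGraph V} (h : G ≤ H) : ncomp H ≤ ncomp G := by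
  apply Nat.card_le_card_of_surjective
    (SimpleGraph.ConnectedComponent.map (SimpleGraph.Hom.ofLE h))
  intro c
  refine c.ind (fun v => ?_)
  exact ⟨G.connectedComponentMk v, rfl⟩

/-- Reachability in `G ⊔ edge u v` decomposes. -/
lemma reachable_sup_edge {G : SimpleGraph V} {u v a b : V}
    (h : (G ⊔ edge u v).Reachable a b) :
    G.Reachable a b ∨
      ((G.Reachable a u ∨ G.Reachable a v) ∧ (G.Reachable b u ∨ G.Reachable b v)) := by
  obtain ⟨p⟩ := h
  induction p with
  | nil => exact Or.inl (Reachable.refl _)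
  | @cons x y w hadj p ih =>
    rcases hadj with hG | he
    · rcases ih with h1 | ⟨h1, h2⟩
      · exact Or.inl ((Adj.reachable hG).trans h1)
      · refine Or.inr ⟨?_, h2⟩
        rcases h1 with h1 | h1
        · exact Or.inl ((Adj.reachable hG).trans h1)
        · exact Or.inr ((Adj.reachable hG).trans h1)
    · rw [edge_adj] at he
      obtain ⟨hxy, -⟩ := he
      have hx : G.Reachable x u ∨ G.Reachable x v := by
        rcases hxy with ⟨hx, -⟩ | ⟨hx, -⟩
        · exact Or.inl (hx ▸ Reachable.refl _)
        · exact Or.inr (hx ▸ Reachable.refl _)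
      have hy : G.Reachable y u ∨ G.Reachable y v := by
        rcases hxy with ⟨-, hy⟩ | ⟨-, hy⟩
        · exact Or.inr (hy ▸ Reachable.refl _)
        · exact Or.inl (hy ▸ Reachable.refl _)
      rcases ih with h1 | ⟨h1, h2⟩
      · refine Or.inr ⟨hx, ?_⟩
        rcases hy with hy | hy
        · exact Or.inl (h1.symm.trans hy)
        · exact Or.inr (h1.symm.trans hy)
      · exact Or.inr ⟨hx, h2⟩

lemma ncomp_le_sup_edge_add_one (G : SimpleGraph V) (u v : V) :
    ncomp G ≤ ncomp (G ⊔ edge u v) + 1 := by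
  classical
  set G' := G ⊔ edge u v with hG'
  have hmap : ∀ x y : V, G.Reachable x y → G'.Reachable x y :=
    fun x y h => h.mono le_sup_left
  let φ : G.ConnectedComponent → G'.ConnectedComponent :=
    SimpleGraph.ConnectedComponent.map (SimpleGraph.Hom.ofLE le_sup_left)
  let f : G.ConnectedComponent → G'.ConnectedComponent ⊕ Unit := fun c =>
    if c = G.connectedComponentMk v then Sum.inr () else Sum.inl (φ c)
  have hinj : Function.Injective f := by
    intro c₁ c₂ hf
    by_cases h1 : c₁ = G.connectedComponentMk v
    · by_cases h2 : c₂ = G.connectedComponentMk v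
      · exact h1.trans h2.symm
      · simp only [f, if_pos h1, if_neg h2] at hf; exact absurd hf (by simp)
    · by_cases h2 : c₂ = G.connectedComponentMk v
      · simp only [f, if_neg h1, if_pos h2] at hf; exact absurd hf (by simp)
      · simp only [f, if_neg h1, if_neg h2, Sum.inl.injEq] at hf
        revert h1 h2 hf
        refine SimpleGraph.ConnectedComponent.ind₂ (fun x y => ?_) c₁ c₂
        intro h1 h2 hf
        have hreach : G'.Reachable x y := by
          simpa only [φ, SimpleGraph.ConnectedComponent.map_mk,
            SimpleGraph.Hom.ofLE_apply,
            SimpleGraph.ConnectedComponent.eq] using hf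
        rcases reachable_sup_edge hreach with h | ⟨hx, hy⟩
        · exact SimpleGraph.ConnectedComponent.sound h
        · have hxu : G.Reachable x u := by
            rcases hx with h | h
            · exact h
            · exact absurd (SimpleGraph.ConnectedComponent.sound h) h1
          have hyu : G.Reachable y u := by
            rcases hy with h | h
            · exact h
            · exact absurd (SimpleGraph.ConnectedComponent.sound h) h2
          exact SimpleGraph.ConnectedComponent.sound (hxu.trans hyu.symm)
  calc ncomp G ≤ Nat.card (G'.ConnectedComponent ⊕ Unit) := Nat.card_le_card_of_injective f hinj
    _ = ncomp G' + 1 := by simp [Nat.card_sum, ncomp, Nat.card_eq_fintype_card]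

lemma ncomp_sup_edge_eq {G : SimpleGraph V} {u v : V} (h : G.Reachable u v) :
    ncomp (G ⊔ edge u v) = ncomp G := by
  classical
  let φ : G.ConnectedComponent → (G ⊔ edge u v).ConnectedComponent :=
    SimpleGraph.ConnectedComponent.map (SimpleGraph.Hom.ofLE le_sup_left)
  have hsurj : Function.Surjective φ := by
    intro c; refine c.ind (fun x => ?_); exact ⟨G.connectedComponentMk x, rfl⟩
  have hinj : Function.Injective φ := by
    intro c₁ c₂ hf
    revert hf
    refine SimpleGraph.ConnectedComponent.ind₂ (fun x y => ?_) c₁ c₂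
    intro hf
    have hreach : (G ⊔ edge u v).Reachable x y := by
      simpa only [φ, SimpleGraph.ConnectedComponent.map_mk,
        SimpleGraph.Hom.ofLE_apply, SimpleGraph.ConnectedComponent.eq] using hf
    rcases reachable_sup_edge hreach with hr | ⟨hx, hy⟩
    · exact SimpleGraph.ConnectedComponent.sound hr
    · have hxu : G.Reachable x u := by rcases hx with h' | h'; exacts [h', h'.trans h.symm]
      have hyu : G.Reachable y u := by rcases hy with h' | h'; exacts [h', h'.trans h.symm]
      exact SimpleGraph.ConnectedComponent.sound (hxu.trans hyu.symm)
  exact (Nat.card_eq_of_bijective φ ⟨hinj, hsurj⟩).symm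

lemma ncomp_sup_edge_lt {G : SimpleGraph V} {u v : V} (h : ¬ G.Reachable u v) :
    ncomp (G ⊔ edge u v) < ncomp G := by
  classical
  let φ : G.ConnectedComponent → (G ⊔ edge u v).ConnectedComponent :=
    SimpleGraph.ConnectedComponent.map (SimpleGraph.Hom.ofLE le_sup_left)
  have hsurj : Function.Surjective φ := by
    intro c; refine c.ind (fun x => ?_); exact ⟨G.connectedComponentMk x, rfl⟩
  have hle := Nat.card_le_card_of_surjective φ hsurj
  rcases lt_or_eq_of_le hle with hlt | heq
  · exact hlt
  · exfalso
    have hbij : Function.Bijective φ :=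
      (Nat.bijective_iff_surjective_and_card φ).2 ⟨hsurj, heq.symm⟩
    have huv : u ≠ v := fun he => h (he ▸ Reachable.refl _)
    have hadj : (G ⊔ edge u v).Adj u v := Or.inr (by rw [edge_adj]; tauto)
    have : φ (G.connectedComponentMk u) = φ (G.connectedComponentMk v) := by
      simp only [φ, SimpleGraph.ConnectedComponent.map_mk,
        SimpleGraph.Hom.ofLE_apply, SimpleGraph.ConnectedComponent.eq]
      exact hadj.reachable
    have := hbij.1 this
    rw [SimpleGraph.ConnectedComponent.eq] at this
    exact h this

lemma ncomp_bot : ncomp (⊥ : SimpleGraph V) = Fintype.card V := by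
  have hbij : Function.Bijective ((⊥ : SimpleGraph V).connectedComponentMk) := by
    constructor
    · intro a b h
      rw [SimpleGraph.ConnectedComponent.eq, reachable_bot] at h
      exact h
    · intro c; exact c.exists_rep
  exact ((Nat.card_eq_of_bijective _ hbij).symm).trans (Nat.card_eq_fintype_card)

lemma ncomp_le_card (G : SimpleGraph V) : ncomp G ≤ Fintype.card V := by
  have := ncomp_le_of_le (bot_le : (⊥ : SimpleGraph V) ≤ G)
  rwa [ncomp_bot] at this

lemma one_le_ncomp [Nonempty V] (G : SimpleGraph V) : 1 ≤ ncomp G :=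
  Nat.one_le_iff_ne_zero.2 (Nat.card_ne_zero.2 ⟨⟨G.connectedComponentMk (Classical.arbitrary V)⟩,
    inferInstance⟩)

lemma ncomp_add_ncomp_le (G H : SimpleGraph V) :
    ncomp G + ncomp H ≤ ncomp (G ⊔ H) + Fintype.card V := by
  classical
  generalize hm : H.edgeSet.ncard = m
  induction m using Nat.strong_induction_on generalizing H with
  | _ m ih =>
  rcases eq_or_ne H ⊥ with rfl | hne
  · rw [sup_bot_eq, ncomp_bot]
  · have hnonempty : H.edgeSet.Nonempty := by
      rw [SimpleGraph.edgeSet_nonempty]; exact hne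
    obtain ⟨e, he⟩ := hnonempty
    revert he
    refine Sym2.ind (fun u v => ?_) e
    intro he
    have huv : u ≠ v := by
      intro h
      exact H.not_isDiag_of_mem_edgeSet he (by rw [h]; exact Sym2.mk_isDiag_iff.2 rfl)
    have hadj : H.Adj u v := (SimpleGraph.mem_edgeSet _).1 he
    set H' := H.deleteEdges {s(u, v)} with hH'
    have hHeq : H' ⊔ edge u v = H := by
      ext a b
      simp only [SimpleGraph.sup_adj, hH', SimpleGraph.deleteEdges_adj, edge_adj,
        Set.mem_singleton_iff]
      constructor
      · rintro (⟨h1, -⟩ | ⟨(⟨rfl, rfl⟩ | ⟨rfl, rfl⟩), -⟩)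
        · exact h1
        · exact hadj
        · exact hadj.symm
      · intro h
        by_cases hs : s(a, b) = s(u, v)
        · rw [Sym2.eq_iff] at hs
          exact Or.inr ⟨hs, h.ne⟩
        · exact Or.inl ⟨h, hs⟩
    have hlt : H'.edgeSet.ncard < m := by
      rw [← hm, hH', SimpleGraph.edgeSet_deleteEdges]
      exact Set.ncard_diff_singleton_lt_of_mem he H.edgeSet.toFinite
    have IH := ih _ hlt H' rfl
    by_cases hr : H'.Reachable u v
    · have h1 : ncomp H = ncomp H' := by rw [← hHeq]; exact ncomp_sup_edge_eq hr
      have h2 : ncomp (G ⊔ H) = ncomp (G ⊔ H') := by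
        rw [← hHeq, ← sup_assoc]
        exact ncomp_sup_edge_eq (hr.mono le_sup_right)
      omega
    · have h1 : ncomp H < ncomp H' := by rw [← hHeq]; exact ncomp_sup_edge_lt hr
      have h2 : ncomp (G ⊔ H') ≤ ncomp (G ⊔ H) + 1 := by
        conv_rhs => rw [← hHeq]
        rw [← sup_assoc]
        exact ncomp_le_sup_edge_add_one _ u v
      omega

end Graph

section Moment

open scoped Classical

variable {n k : ℕ}

lemma Xent_mk (lam : ℝ) (z : Fin n → Fin k) (i j : Fin n) :
    Xent lam z s(i, j) = if z i = z j then lam else 0 := rfl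

lemma edgeGraphE_adj {γ : OffDiag n → ℕ} {i j : Fin n} :
    (edgeGraphE γ).Adj i j ↔
      ∃ h : ¬ (s(i, j) : Sym2 (Fin n)).IsDiag, γ ⟨s(i, j), h⟩ ≠ 0 := by
  rw [edgeGraphE, SimpleGraph.fromRel_adj]
  constructor
  · rintro ⟨hne, h | h⟩
    · exact h
    · obtain ⟨hd, hγ⟩ := h
      have he : (s(j, i) : Sym2 (Fin n)) = s(i, j) := Sym2.eq_swap
      refine ⟨he ▸ hd, ?_⟩
      convert hγ using 2
      exact Subtype.ext he.symm
  · rintro ⟨hd, hγ⟩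
    exact ⟨fun hij => hd (Sym2.mk_isDiag_iff.2 hij), Or.inl ⟨hd, hγ⟩⟩

lemma Xpow_eq (lam : ℝ) (z : Fin n → Fin k) (γ : OffDiag n → ℕ) :
    Xpow lam z γ =
      if ∀ a b, (edgeGraphE γ).Adj a b → z a = z b then lam ^ (∑ e, γ e) else 0 := by
  classical
  by_cases hP : ∀ a b, (edgeGraphE γ).Adj a b → z a = z b
  · rw [if_pos hP, Xpow, ← Finset.prod_pow_eq_pow_sum]
    refine Finset.prod_congr rfl (fun e he => ?_)
    clear he
    rcases Nat.eq_zero_or_pos (γ e) with h0 | hpos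
    · rw [h0, pow_zero, pow_zero]
    · congr 1
      obtain ⟨p, hd⟩ := e
      revert hd hpos
      refine Sym2.ind (fun i j hd hpos => ?_) p
      have hadj : (edgeGraphE γ).Adj i j :=
        edgeGraphE_adj.2 ⟨hd, Nat.pos_iff_ne_zero.1 hpos⟩
      rw [Xent_mk, if_pos (hP i j hadj)]
  · rw [if_neg hP, Xpow]
    push_neg at hP
    obtain ⟨a, b, hadj, hzne⟩ := hP
    rw [edgeGraphE_adj] at hadj
    obtain ⟨hd, hγ⟩ := hadj
    apply Finset.prod_eq_zero (Finset.mem_univ (⟨s(a, b), hd⟩ : OffDiag n))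
    have hX : Xent lam z s(a, b) = 0 := by rw [Xent_mk, if_neg hzne]
    rw [hX, zero_pow hγ]

lemma card_comp_fixed (G : SimpleGraph (Fin n)) (i₀ : Fin n) (v₀ : Fin k) :
    Nat.card {z : Fin n → Fin k // z i₀ = v₀ ∧ ∀ a b, G.Adj a b → z a = z b} =
      k ^ (ncomp G - 1) := by
  classical
  have hconst : ∀ (z : Fin n → Fin k), (∀ a b, G.Adj a b → z a = z b) →
      ∀ {a b : Fin n}, G.Reachable a b → z a = z b := by
    intro z hz a b h
    obtain ⟨p⟩ := h
    induction p with
    | nil => rfl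
    | cons h p ih => exact (hz _ _ h).trans ih
  let e1 : {z : Fin n → Fin k // z i₀ = v₀ ∧ ∀ a b, G.Adj a b → z a = z b} ≃
      {f : G.ConnectedComponent → Fin k // f (G.connectedComponentMk i₀) = v₀} :=
    { toFun := fun z => ⟨SimpleGraph.ConnectedComponent.lift z.1
        (fun v w p _ => hconst z.1 z.2.2 p.reachable), z.2.1⟩
      invFun := fun f => ⟨fun v => f.1 (G.connectedComponentMk v), f.2,
        fun a b hab => congrArg f.1 (SimpleGraph.ConnectedComponent.sound hab.reachable)⟩
      left_inv := fun z => Subtype.ext (funext fun v => rfl)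
      right_inv := fun f => Subtype.ext (funext fun c => c.ind (fun v => rfl)) }
  let c₀ := G.connectedComponentMk i₀
  let e2 : {f : G.ConnectedComponent → Fin k // f c₀ = v₀} ≃
      ({c : G.ConnectedComponent // c ≠ c₀} → Fin k) :=
    { toFun := fun f c => f.1 c.1
      invFun := fun g => ⟨fun c => if h : c = c₀ then v₀ else g ⟨c, h⟩, dif_pos rfl⟩
      left_inv := fun f => Subtype.ext (funext fun c => by
        dsimp only
        by_cases h : c = c₀
        · subst h; rw [dif_pos rfl]; exact f.2.symm
        · exact dif_neg h)
      right_inv := fun g => funext fun c => dif_neg c.2 }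
  rw [Nat.card_congr (e1.trans e2), Nat.card_fun]
  have h1 : Nat.card (Fin k) = k := by simp
  have h2 : Nat.card {c : G.ConnectedComponent // c ≠ c₀} = ncomp G - 1 := by
    letI : Fintype G.ConnectedComponent := Fintype.ofFinite _
    rw [Nat.card_eq_fintype_card]
    have : Fintype.card {c : G.ConnectedComponent // c ≠ c₀} =
        Fintype.card G.ConnectedComponent - Fintype.card {c // c = c₀} :=
      Fintype.card_subtype_compl _
    rw [this, Fintype.card_subtype_eq, ncomp, Nat.card_eq_fintype_card]
  rw [h1, h2]

lemma card_filter_comp_fixed (G : SimpleGraph (Fin n)) (i₀ : Fin n) (v₀ : Fin k) :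
    (Finset.univ.filter (fun z : Fin n → Fin k =>
        z i₀ = v₀ ∧ ∀ a b, G.Adj a b → z a = z b)).card = k ^ (ncomp G - 1) := by
  classical
  rw [← Fintype.card_subtype, ← Nat.card_eq_fintype_card]
  exact card_comp_fixed G i₀ v₀

lemma card_fixed (i₀ : Fin n) (v₀ : Fin k) :
    Nat.card {z : Fin n → Fin k // z i₀ = v₀} = k ^ (n - 1) := by
  have h := card_comp_fixed (⊥ : SimpleGraph (Fin n)) i₀ v₀
  rw [ncomp_bot, Fintype.card_fin] at h
  rw [← h]
  exact Nat.card_congr (Equiv.subtypeEquivRight (fun z => (and_iff_left (by simp)).symm))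

end Moment

section Moment2

open scoped Classical

variable {n k : ℕ}

lemma sbmE_Xpow (hn : 0 < n) (hk : 0 < k) (lam : ℝ) (γ : OffDiag n → ℕ) :
    sbmE n k hn hk (fun z => Xpow lam z γ) =
      lam ^ (∑ e, γ e) * (1 / (k : ℝ)) ^ (n - ncomp (edgeGraphE γ)) := by
  classical
  set i₀ : Fin n := ⟨0, hn⟩
  set v₀ : Fin k := ⟨0, hk⟩
  set G := edgeGraphE γ with hG
  set c := ncomp G with hc
  have hc1 : 1 ≤ c := by
    have : Nonempty (Fin n) := ⟨i₀⟩
    exact one_le_ncomp G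
  have hcn : c ≤ n := by
    have := ncomp_le_card G
    rwa [Fintype.card_fin] at this
  rw [sbmE]
  have hnum : ∑ z ∈ Finset.univ.filter (fun z : Fin n → Fin k => z i₀ = v₀),
      Xpow lam z γ = lam ^ (∑ e, γ e) * (k : ℝ) ^ (c - 1) := by
    have h1 : ∀ z : Fin n → Fin k, Xpow lam z γ =
        if ∀ a b, G.Adj a b → z a = z b then lam ^ (∑ e, γ e) else 0 :=
      fun z => Xpow_eq lam z γ
    rw [Finset.sum_congr rfl (fun z _ => h1 z), ← Finset.sum_filter,
      Finset.filter_filter, Finset.sum_const, nsmul_eq_mul]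
    have hcard : (Finset.univ.filter (fun z : Fin n → Fin k =>
        z i₀ = v₀ ∧ ∀ a b, G.Adj a b → z a = z b)).card = k ^ (c - 1) := by
      rw [← Fintype.card_subtype, ← Nat.card_eq_fintype_card]
      exact card_comp_fixed G i₀ v₀
    rw [hcard]
    push_cast
    ring
  have hden : ((Finset.univ.filter
      (fun z : Fin n → Fin k => z i₀ = v₀)).card : ℝ) = (k : ℝ) ^ (n - 1) := by
    have : (Finset.univ.filter (fun z : Fin n → Fin k => z i₀ = v₀)).card =
        k ^ (n - 1) := by
      rw [← Fintype.card_subtype, ← Nat.card_eq_fintype_card]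
      exact card_fixed i₀ v₀
    rw [this]
    push_cast
    ring
  rw [hnum, hden]
  have hk0 : (k : ℝ) ≠ 0 := Nat.cast_ne_zero.2 hk.ne'
  have hsplit : (k : ℝ) ^ (n - 1) = (k : ℝ) ^ (c - 1) * (k : ℝ) ^ (n - c) := by
    rw [← pow_add]
    congr 1
    omega
  rw [hsplit, one_div, inv_pow]
  field_simp

end Moment2

section Main

open scoped Classical

variable {n k : ℕ}

/-- The distinguished edge `{1,2}` (index `0,1`). -/
def e0 (n : ℕ) (hn : 2 ≤ n) : OffDiag n :=
  ⟨s((⟨0, by omega⟩ : Fin n), (⟨1, hn⟩ : Fin n)), by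
    rw [Sym2.mk_isDiag_iff]
    intro h
    have := congrArg Fin.val h
    simp at this⟩

/-- Indicator multigraph of the distinguished edge. -/
noncomputable def edel (n : ℕ) (hn : 2 ≤ n) : OffDiag n → ℕ :=
  fun e => if e = e0 n hn then 1 else 0

lemma sum_edel (n : ℕ) (hn : 2 ≤ n) : ∑ e, edel n hn e = 1 := by
  simp only [edel]
  rw [Finset.sum_ite_eq' Finset.univ (e0 n hn) (fun _ => 1)]
  simp

lemma Xpow_add_edel (hn : 2 ≤ n) (lam : ℝ) (z : Fin n → Fin k) (γ : OffDiag n → ℕ) :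
    Xpow lam z (γ + edel n hn) =
      Xent lam z s((⟨0, by omega⟩ : Fin n), (⟨1, hn⟩ : Fin n)) * Xpow lam z γ := by
  rw [Xpow, Xpow]
  have : ∀ e : OffDiag n, Xent lam z e.1 ^ (γ + edel n hn) e =
      Xent lam z e.1 ^ γ e * Xent lam z e.1 ^ edel n hn e :=
    fun e => by rw [Pi.add_apply, pow_add]
  rw [Finset.prod_congr rfl (fun e _ => this e), Finset.prod_mul_distrib]
  have h2 : ∏ e : OffDiag n, Xent lam z e.1 ^ edel n hn e =
      Xent lam z (e0 n hn).1 := by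
    rw [Finset.prod_eq_single (e0 n hn)
      (fun e _ he => by simp only [edel]; rw [if_neg he, pow_zero])
      (fun h => absurd (Finset.mem_univ _) h)]
    simp [edel]
  rw [h2, mul_comm]
  rfl

/-- The binomial identity `∑_{β ≤ α} C(α,β) m^{|β|} = (m+1)^{|α|}` (in `ℕ`). -/
lemma sum_choose_mul_pow (α : OffDiag n → ℕ) (m : ℕ) :
    ∑ β ∈ Finset.Icc 0 α, (∏ e, (α e).choose (β e)) * m ^ (∑ e, β e)
      = (m + 1) ^ (∑ e, α e) := by
  classical
  have hpi : Finset.Icc 0 α = Fintype.piFinset (fun e => Finset.Icc 0 (α e)) := by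
    ext β
    simp [Finset.mem_Icc, Fintype.mem_piFinset, Pi.le_def]
  have hterm : ∀ β : OffDiag n → ℕ, (∏ e, (α e).choose (β e)) * m ^ (∑ e, β e) =
      ∏ e, ((α e).choose (β e) * m ^ (β e)) := by
    intro β
    rw [Finset.prod_mul_distrib, Finset.prod_pow_eq_pow_sum]
  rw [Finset.sum_congr hpi (fun β _ => hterm β),
    ← Finset.prod_univ_sum (fun e : OffDiag n => Finset.Icc 0 (α e))
      (fun e b => (α e).choose b * m ^ b)]
  have h1 : ∀ e : OffDiag n, ∑ b ∈ Finset.Icc 0 (α e), (α e).choose b * m ^ b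
      = (m + 1) ^ (α e) := by
    intro e
    have : Finset.Icc 0 (α e) = Finset.range (α e + 1) := by
      ext b; simp [Nat.lt_succ_iff]
    rw [this, add_pow m 1 (α e)]
    refine Finset.sum_congr rfl (fun b hb => ?_)
    simp [mul_comm]
  rw [Finset.prod_congr rfl (fun e _ => h1 e), ← Finset.prod_pow_eq_pow_sum]

lemma one_le_pow_self (m : ℕ) : 1 ≤ m ^ m := by
  rcases Nat.eq_zero_or_pos m with rfl | h
  · simp
  · exact Nat.one_le_pow _ _ h

/-- The two moment functionals. -/
noncomputable def MxF (n k : ℕ) (hn : 2 ≤ n) (hk : 0 < k) (lam : ℝ)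
    (γ : OffDiag n → ℕ) : ℝ :=
  sbmE n k (by omega) hk
    (fun z => Xent lam z s((⟨0, by omega⟩ : Fin n), (⟨1, hn⟩ : Fin n)) *
      Xpow lam z γ)

noncomputable def MmF (n k : ℕ) (hn : 2 ≤ n) (hk : 0 < k) (lam : ℝ)
    (γ : OffDiag n → ℕ) : ℝ :=
  sbmE n k (by omega) hk (fun z => Xpow lam z γ)

lemma MmF_eq (n k : ℕ) (hn : 2 ≤ n) (hk : 0 < k) (lam : ℝ) (γ : OffDiag n → ℕ) :
    MmF n k hn hk lam γ = sbmE n k (by omega) hk (fun z => Xpow lam z γ) := rfl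

lemma kappaSBM_eq (n k : ℕ) (hn : 2 ≤ n) (hk : 0 < k) (lam : ℝ) :
    kappaSBM n k hn hk lam = kappaRec (MxF n k hn hk lam) (MmF n k hn hk lam) := rfl

lemma kappaSBM_rec (n k : ℕ) (hn : 2 ≤ n) (hk : 0 < k) (lam : ℝ)
    (α : OffDiag n → ℕ) :
    kappaSBM n k hn hk lam α = MxF n k hn hk lam α -
      ∑ β ∈ ((Finset.Icc 0 α).erase α).attach,
        kappaSBM n k hn hk lam β.1 * ((∏ e, (α e).choose (β.1 e) : ℕ) : ℝ) *
          MmF n k hn hk lam (α - β.1) := by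
  conv_lhs => rw [kappaSBM_eq, kappaRec]
  rfl

/-- The generalized bound, for every multigraph `α`. -/
lemma kappa_bound (n k : ℕ) (hn : 2 ≤ n) (hk : 0 < k) (lam : ℝ) (hlam : 0 < lam) :
    ∀ (m : ℕ) (α : OffDiag n → ℕ), (∑ e, α e) = m →
    |kappaSBM n k hn hk lam α| ≤
      lam ^ (m + 1) * (1 / (k : ℝ)) ^ (n - ncomp (edgeGraphE (α + edel n hn))) *
        ((m : ℝ) + 1) ^ m := by
  classical
  have hn0 : 0 < n := by omega
  set δ := edel n hn with hδ
  have hr : ∀ γ : OffDiag n → ℕ, ncomp (edgeGraphE γ) ≤ n := by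
    intro γ
    have := ncomp_le_card (edgeGraphE γ)
    rwa [Fintype.card_fin] at this
  have hMm : ∀ γ : OffDiag n → ℕ, MmF n k hn hk lam γ =
      lam ^ (∑ e, γ e) * (1 / (k : ℝ)) ^ (n - ncomp (edgeGraphE γ)) := by
    intro γ
    exact sbmE_Xpow _ hk lam γ
  have hMx : ∀ γ : OffDiag n → ℕ, MxF n k hn hk lam γ =
      lam ^ ((∑ e, γ e) + 1) * (1 / (k : ℝ)) ^ (n - ncomp (edgeGraphE (γ + δ))) := by
    intro γ
    rw [MxF]
    have : (fun z : Fin n → Fin k =>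
        Xent lam z s((⟨0, by omega⟩ : Fin n), (⟨1, hn⟩ : Fin n)) * Xpow lam z γ) =
        fun z => Xpow lam z (γ + δ) := by
      funext z
      rw [hδ, Xpow_add_edel hn]
    simp only [sbmE, this]
    have h2 := sbmE_Xpow (n := n) (k := k) (by omega) hk lam (γ + δ)
    simp only [sbmE] at h2
    rw [h2]
    congr 2
    simp only [Pi.add_apply]
    rw [Finset.sum_add_distrib, hδ, sum_edel]
  have hk1 : 0 < (1 / (k : ℝ)) := by positivity
  have hk1' : (1 / (k : ℝ)) ≤ 1 := by
    rw [div_le_one (by exact_mod_cast hk)]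
    exact_mod_cast hk
  -- strong induction
  intro m
  induction m using Nat.strong_induction_on with
  | _ m ih =>
  intro α hα
  rw [kappaSBM_rec]
  set r : ℕ := n - ncomp (edgeGraphE (α + δ)) with hrdef
  have hMxα : |MxF n k hn hk lam α| = lam ^ (m + 1) * (1 / (k : ℝ)) ^ r := by
    rw [hMx α, hα, abs_of_nonneg (by positivity)]
  have habs : |MxF n k hn hk lam α - ∑ β ∈ ((Finset.Icc 0 α).erase α).attach,
      kappaSBM n k hn hk lam β.1 * ((∏ e, (α e).choose (β.1 e) : ℕ) : ℝ) * MmF n k hn hk lam (α - β.1)| ≤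
      |MxF n k hn hk lam α| + ∑ β ∈ ((Finset.Icc 0 α).erase α).attach,
        |kappaSBM n k hn hk lam β.1| * ((∏ e, (α e).choose (β.1 e) : ℕ) : ℝ) *
          MmF n k hn hk lam (α - β.1) := by
    refine (abs_sub _ _).trans ?_
    gcongr
    refine (Finset.abs_sum_le_sum_abs _ _).trans ?_
    refine Finset.sum_le_sum (fun β _ => ?_)
    rw [abs_mul, abs_mul]
    have h1 : |((∏ e, (α e).choose (β.1 e) : ℕ) : ℝ)| =
        ((∏ e, (α e).choose (β.1 e) : ℕ) : ℝ) := abs_of_nonneg (by positivity)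
    have h2 : |MmF n k hn hk lam (α - β.1)| = MmF n k hn hk lam (α - β.1) := by
      rw [hMm]; exact abs_of_nonneg (by positivity)
    rw [h1, h2]
  refine habs.trans ?_
  -- bound each summand
  have hsummand : ∀ β : {x // x ∈ (Finset.Icc 0 α).erase α},
      |kappaSBM n k hn hk lam β.1| * ((∏ e, (α e).choose (β.1 e) : ℕ) : ℝ) *
        MmF n k hn hk lam (α - β.1) ≤
      (lam ^ (m + 1) * (1 / (k : ℝ)) ^ r) *
        (((∏ e, (α e).choose (β.1 e) : ℕ) : ℝ) * (m : ℝ) ^ (∑ e, β.1 e)) := by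
    rintro ⟨β, hβ⟩
    rw [Finset.mem_erase, Finset.mem_Icc] at hβ
    obtain ⟨hβne, -, hβle⟩ := hβ
    have hβlt : (∑ e, β e) < m := by
      rw [← hα]
      refine Finset.sum_lt_sum (fun i _ => hβle i) ?_
      obtain ⟨e, he⟩ := Function.ne_iff.mp hβne
      exact ⟨e, Finset.mem_univ e, lt_of_le_of_ne (hβle e) he⟩
    set s := ∑ e, β e with hs
    have hIH := ih s hβlt β rfl
    have hsum_sub : (∑ e, (α - β) e) = m - s := by
      rw [← hα, hs]
      rw [eq_tsub_iff_add_eq_of_le (Finset.sum_le_sum (fun i _ => hβle i)),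
        ← Finset.sum_add_distrib]
      exact Finset.sum_congr rfl (fun e _ => by
        have h : β e ≤ α e := hβle e
        rw [Pi.sub_apply]; omega)
    have hMmv := hMm (α - β)
    rw [hsum_sub] at hMmv
    -- rank subadditivity
    have hrank : r ≤ (n - ncomp (edgeGraphE (β + δ))) +
        (n - ncomp (edgeGraphE (α - β))) := by
      have hsup : edgeGraphE (α + δ) = edgeGraphE (β + δ) ⊔ edgeGraphE (α - β) := by
        ext i j
        simp only [SimpleGraph.sup_adj, edgeGraphE_adj]
        constructor
        · rintro ⟨h, hne⟩
          have hle : β ⟨s(i, j), h⟩ ≤ α ⟨s(i, j), h⟩ := hβle _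
          simp only [Pi.add_apply, Pi.sub_apply] at hne ⊢
          by_cases hb : β ⟨s(i, j), h⟩ + δ ⟨s(i, j), h⟩ ≠ 0
          · exact Or.inl ⟨h, hb⟩
          · exact Or.inr ⟨h, by omega⟩
        · rintro (⟨h, hne⟩ | ⟨h, hne⟩) <;>
            refine ⟨h, ?_⟩ <;>
            [skip; skip] <;>
            · have hle : β ⟨s(i, j), h⟩ ≤ α ⟨s(i, j), h⟩ := hβle _
              simp only [Pi.add_apply, Pi.sub_apply] at hne ⊢
              omega
      have hcomp := ncomp_add_ncomp_le (edgeGraphE (β + δ)) (edgeGraphE (α - β))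
      rw [← hsup, Fintype.card_fin] at hcomp
      have h1 := hr (β + δ)
      have h2 := hr (α - β)
      have h3 := hr (α + δ)
      rw [hrdef]
      omega
    -- combine
    calc |kappaSBM n k hn hk lam β| * ((∏ e, (α e).choose (β e) : ℕ) : ℝ) * MmF n k hn hk lam (α - β)
        ≤ (lam ^ (s + 1) * (1 / (k : ℝ)) ^ (n - ncomp (edgeGraphE (β + δ))) *
            ((s : ℝ) + 1) ^ s) * ((∏ e, (α e).choose (β e) : ℕ) : ℝ) *
          (lam ^ (m - s) * (1 / (k : ℝ)) ^ (n - ncomp (edgeGraphE (α - β)))) := by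
          rw [hMmv]
          gcongr
      _ = (lam ^ (s + 1) * lam ^ (m - s)) *
            ((1 / (k : ℝ)) ^ ((n - ncomp (edgeGraphE (β + δ))) +
              (n - ncomp (edgeGraphE (α - β))))) *
            (((s : ℝ) + 1) ^ s * ((∏ e, (α e).choose (β e) : ℕ) : ℝ)) := by
          rw [pow_add]; ring
      _ ≤ (lam ^ (m + 1)) * ((1 / (k : ℝ)) ^ r) *
            ((m : ℝ) ^ s * ((∏ e, (α e).choose (β e) : ℕ) : ℝ)) := by
          have hl : lam ^ (s + 1) * lam ^ (m - s) = lam ^ (m + 1) := by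
            rw [← pow_add]
            congr 1
            omega
          rw [hl]
          have e1 : (1 / (k : ℝ)) ^ ((n - ncomp (edgeGraphE (β + δ))) +
              (n - ncomp (edgeGraphE (α - β)))) ≤ (1 / (k : ℝ)) ^ r :=
            pow_le_pow_of_le_one (le_of_lt hk1) hk1' hrank
          have hsm : (s : ℝ) + 1 ≤ (m : ℝ) := by
            exact_mod_cast Nat.succ_le_of_lt hβlt
          have e2 : ((s : ℝ) + 1) ^ s ≤ (m : ℝ) ^ s :=
            pow_le_pow_left₀ (by positivity) hsm s
          have hC : (0 : ℝ) ≤ ((∏ e, (α e).choose (β e) : ℕ) : ℝ) := by positivity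
          exact mul_le_mul (mul_le_mul_of_nonneg_left e1 (by positivity))
            (mul_le_mul_of_nonneg_right e2 hC) (by positivity) (by positivity)
      _ = (lam ^ (m + 1) * (1 / (k : ℝ)) ^ r) *
            (((∏ e, (α e).choose (β e) : ℕ) : ℝ) * (m : ℝ) ^ s) := by ring
  have hα_mem : α ∈ Finset.Icc 0 α := Finset.mem_Icc.2 ⟨zero_le, le_refl _⟩
  have hNat : (∑ β ∈ (Finset.Icc 0 α).erase α,
      (∏ e, (α e).choose (β e)) * m ^ (∑ e, β e)) + m ^ m = (m + 1) ^ m := by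
    have h := Finset.sum_erase_add (Finset.Icc 0 α)
      (fun β => (∏ e, (α e).choose (β e)) * m ^ (∑ e, β e)) hα_mem
    simp only [Nat.choose_self, Finset.prod_const_one, one_mul, hα] at h
    rw [h, sum_choose_mul_pow, hα]
  have hfac : 1 + ∑ β ∈ (Finset.Icc 0 α).erase α,
      ((∏ e, (α e).choose (β e) : ℕ) : ℝ) * (m : ℝ) ^ (∑ e, β e) ≤
      ((m : ℝ) + 1) ^ m := by
    have h1 : (1 : ℝ) ≤ ((m ^ m : ℕ) : ℝ) := by exact_mod_cast one_le_pow_self m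
    have h2 : ((((∑ β ∈ (Finset.Icc 0 α).erase α,
        (∏ e, (α e).choose (β e)) * m ^ (∑ e, β e)) + m ^ m : ℕ)) : ℝ) =
        ((m : ℝ) + 1) ^ m := by
      rw [hNat]; push_cast; ring
    push_cast at h2
    calc 1 + ∑ β ∈ (Finset.Icc 0 α).erase α,
          ((∏ e, (α e).choose (β e) : ℕ) : ℝ) * (m : ℝ) ^ (∑ e, β e)
        ≤ ((m ^ m : ℕ) : ℝ) + ∑ β ∈ (Finset.Icc 0 α).erase α,
          ((∏ e, (α e).choose (β e) : ℕ) : ℝ) * (m : ℝ) ^ (∑ e, β e) := by gcongr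
      _ = ((m : ℝ) + 1) ^ m := by rw [← h2]; push_cast; ring
  calc |MxF n k hn hk lam α| + ∑ β ∈ ((Finset.Icc 0 α).erase α).attach,
        |kappaSBM n k hn hk lam β.1| * ((∏ e, (α e).choose (β.1 e) : ℕ) : ℝ) *
          MmF n k hn hk lam (α - β.1)
      ≤ (lam ^ (m + 1) * (1 / (k : ℝ)) ^ r) +
        ∑ β ∈ ((Finset.Icc 0 α).erase α).attach,
          (lam ^ (m + 1) * (1 / (k : ℝ)) ^ r) *
            (((∏ e, (α e).choose (β.1 e) : ℕ) : ℝ) * (m : ℝ) ^ (∑ e, β.1 e)) :=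
        add_le_add (le_of_eq hMxα) (Finset.sum_le_sum (fun β _ => hsummand β))
    _ = (lam ^ (m + 1) * (1 / (k : ℝ)) ^ r) *
        (1 + ∑ β ∈ (Finset.Icc 0 α).erase α,
          ((∏ e, (α e).choose (β e) : ℕ) : ℝ) * (m : ℝ) ^ (∑ e, β e)) := by
        rw [mul_add, mul_one, Finset.mul_sum,
          Finset.sum_attach ((Finset.Icc 0 α).erase α)
            (fun β => (lam ^ (m + 1) * (1 / (k : ℝ)) ^ r) *
              (((∏ e, (α e).choose (β e) : ℕ) : ℝ) * (m : ℝ) ^ (∑ e, β e)))]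
    _ ≤ (lam ^ (m + 1) * (1 / (k : ℝ)) ^ r) * ((m : ℝ) + 1) ^ m :=
        mul_le_mul_of_nonneg_left hfac (by positivity)

end Main

section Final

lemma edgeGraphE_mono {n : ℕ} {γ γ' : OffDiag n → ℕ} (h : ∀ e, γ e ≠ 0 → γ' e ≠ 0) :
    edgeGraphE γ ≤ edgeGraphE γ' := by
  intro i j hij
  rw [edgeGraphE_adj] at hij ⊢
  obtain ⟨hd, hne⟩ := hij
  exact ⟨hd, h _ hne⟩

lemma ncomp_eq_of_conn {n : ℕ} (hn : 2 ≤ n) (α : OffDiag n → ℕ)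
    (hconn : MGConnectedE α)
    (h2 : (⟨1, hn⟩ : Fin n) ∈ vertexSetE α)
    (h1 : (⟨0, by omega⟩ : Fin n) ∈ vertexSetE α) :
    ncomp (edgeGraphE (α + edel n hn)) = (n - (vertexSetE α).ncard) + 1 := by
  classical
  set S := vertexSetE α with hS
  set G := edgeGraphE (α + edel n hn) with hG
  -- endpoints of G-edges lie in S
  have hadjS : ∀ i j : Fin n, G.Adj i j → i ∈ S ∧ j ∈ S := by
    intro i j hij
    rw [hG, edgeGraphE_adj] at hij
    obtain ⟨hd, hne⟩ := hij
    rw [Pi.add_apply] at hne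
    by_cases hα : α ⟨s(i, j), hd⟩ ≠ 0
    · constructor
      · exact ⟨⟨s(i, j), hd⟩, hα, Sym2.mem_mk_left i j⟩
      · exact ⟨⟨s(i, j), hd⟩, hα, Sym2.mem_mk_right i j⟩
    · have hδ : edel n hn ⟨s(i, j), hd⟩ ≠ 0 := by omega
      simp only [edel] at hδ
      by_cases he : (⟨s(i, j), hd⟩ : OffDiag n) = e0 n hn
      · have hs : (s(i, j) : Sym2 (Fin n)) =
            s((⟨0, by omega⟩ : Fin n), (⟨1, hn⟩ : Fin n)) := congrArg Subtype.val he
        rw [Sym2.eq_iff] at hs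
        rcases hs with ⟨hi, hj⟩ | ⟨hi, hj⟩
        · exact ⟨by rw [hi]; exact h1, by rw [hj]; exact h2⟩
        · exact ⟨by rw [hi]; exact h2, by rw [hj]; exact h1⟩
      · rw [if_neg he] at hδ
        exact absurd rfl hδ
    -- mono : edgeGraphE α ≤ G
  have hmono : edgeGraphE α ≤ G := by
    rw [hG]
    refine edgeGraphE_mono (fun e he => ?_)
    rw [Pi.add_apply]
    omega
  have hreachS : ∀ u ∈ S, ∀ v ∈ S, G.Reachable u v := by
    intro u hu v hv
    exact (hconn.2 u hu v hv).mono hmono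
  -- the quotient map
  let g : Fin n → (↥(Sᶜ) ⊕ Unit) := fun v =>
    if h : v ∈ S then Sum.inr () else Sum.inl ⟨v, h⟩
  have hgadj : ∀ a b : Fin n, G.Adj a b → g a = g b := by
    intro a b hab
    obtain ⟨ha, hb⟩ := hadjS a b hab
    simp only [g, dif_pos ha, dif_pos hb]
  have hgwalk : ∀ (a b : Fin n), G.Reachable a b → g a = g b ∨ (a ∈ S ∧ b ∈ S) := by
    intro a b h
    obtain ⟨p⟩ := h
    induction p with
    | nil => exact Or.inl rfl
    | cons h p ih =>
      have := hadjS _ _ h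
      rcases ih with h' | h' <;>
        [exact Or.inl ((hgadj _ _ h).trans h');
         exact Or.inr ⟨this.1, h'.2⟩]
  have hgconst : ∀ (a b : Fin n), G.Reachable a b → g a = g b := by
    intro a b h
    rcases hgwalk a b h with h' | ⟨ha, hb⟩
    · exact h'
    · simp only [g, dif_pos ha, dif_pos hb]
  let ψ : G.ConnectedComponent → (↥(Sᶜ) ⊕ Unit) :=
    SimpleGraph.ConnectedComponent.lift g
      (fun v w p _ => hgconst v w p.reachable)
  have hψbij : Function.Bijective ψ := by
    constructor
    · intro c₁ c₂ hc
      revert hc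
      refine SimpleGraph.ConnectedComponent.ind₂ (fun x y => ?_) c₁ c₂
      intro hc
      simp only [ψ, SimpleGraph.ConnectedComponent.lift_mk] at hc
      by_cases hx : x ∈ S <;> by_cases hy : y ∈ S
      · exact SimpleGraph.ConnectedComponent.sound (hreachS x hx y hy)
      · simp [g, dif_pos hx, dif_neg hy] at hc
      · simp [g, dif_neg hx, dif_pos hy] at hc
      · simp only [g, dif_neg hx, dif_neg hy, Sum.inl.injEq, Subtype.mk.injEq] at hc
        rw [hc]
    · intro x
      rcases x with ⟨v, hv⟩ | u
      · refine ⟨G.connectedComponentMk v, ?_⟩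
        simp only [ψ, SimpleGraph.ConnectedComponent.lift_mk, g]
        rw [dif_neg hv]
      · refine ⟨G.connectedComponentMk ⟨0, by omega⟩, ?_⟩
        simp only [ψ, SimpleGraph.ConnectedComponent.lift_mk, g]
        rw [dif_pos h1]
  have hcard : ncomp G = Nat.card (↥(Sᶜ)) + 1 := by
    rw [ncomp, Nat.card_eq_of_bijective ψ hψbij, Nat.card_sum]
    simp
  rw [hcard]
  have h1' : Nat.card (↥(Sᶜ)) = (Sᶜ : Set (Fin n)).ncard := Nat.card_coe_set_eq _
  have h2' : S.ncard + (Sᶜ : Set (Fin n)).ncard = n := by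
    rw [Set.ncard_add_ncard_compl, Nat.card_eq_fintype_card, Fintype.card_fin]
  have h3' : 0 < S.ncard := (Set.ncard_pos (Set.toFinite S)).2 hconn.1
  rw [h1']
  omega

end Final

/-- Under the uniform SBM prior with fixed first vertex, for a
connected multigraph `α` with `|α| ≥ 1` and both vertices 1 and 2 spanned,
`|κ_α(x, X)| ≤ λ^{|α|+1} (1/k)^{|V(α)|−1} (|α|+1)^{|α|}`. -/
theorem kappaSBM_abs_le (n k : ℕ) (hn : 2 ≤ n)
    (hk : 0 < k) (lam : ℝ) (hlam : 0 < lam) (α : OffDiag n → ℕ)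
    (hconn : MGConnectedE α) (hcard : 1 ≤ ∑ e, α e)
    (h2 : (⟨1, hn⟩ : Fin n) ∈ vertexSetE α)
    (h1 : (⟨0, by omega⟩ : Fin n) ∈ vertexSetE α) :
    |kappaSBM n k hn hk lam α| ≤
      lam ^ (∑ e, α e + 1) * (1 / (k : ℝ)) ^ ((vertexSetE α).ncard - 1) *
        ((∑ e, α e : ℕ) + 1 : ℝ) ^ (∑ e, α e) := by
  have hb := kappa_bound n k hn hk lam hlam (∑ e, α e) α rfl
  have hc := ncomp_eq_of_conn hn α hconn h2 h1
  rw [hc] at hb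
  have hSn : (vertexSetE α).ncard ≤ n := by
    have h := Set.ncard_le_ncard (Set.subset_univ (vertexSetE α)) (Set.toFinite _)
    rwa [Set.ncard_univ, Nat.card_eq_fintype_card, Fintype.card_fin] at h
  have hS1 : 0 < (vertexSetE α).ncard :=
    (Set.ncard_pos (Set.toFinite _)).2 hconn.1
  have hexp : n - ((n - (vertexSetE α).ncard) + 1) = (vertexSetE α).ncard - 1 := by
    omega
  rw [hexp] at hb
  exact hb
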